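/- arXiv:2103.17050 — 3 statements merged into one kernel-verified Lean document; each statement's English description precedes it below -/
import Mathlib

section
/- For every integer n ≥ 4 and every positive divisor c of 4n−8, the rational number (1/24)·( (n+2)·gcd(c,4n−8)²/(4n−8) + gcd(c,2)² − gcd(c,4)²/4 − 2·gcd(c,2n−4)²/(2n−4) − 1 ) is nonnegative, and it equals 0 if and only if c = 1. -/
set_option maxHeartbeats 2000000 in
theorem eta_product_Dn_order_nonneg (n : ℕ) (hn : 4 ≤ n) (c : ℕ) (hc : 0 < c)
    (hdvd : c ∣ 4 * n - 8) :
    0 ≤ (1 / 24 : ℚ) *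
        (((n : ℚ) + 2) * (Nat.gcd c (4 * n - 8) : ℚ) ^ 2 / (4 * (n : ℚ) - 8)
          + (Nat.gcd c 2 : ℚ) ^ 2
          - (Nat.gcd c 4 : ℚ) ^ 2 / 4
          - 2 * (Nat.gcd c (2 * n - 4) : ℚ) ^ 2 / (2 * (n : ℚ) - 4)
          - 1) ∧
      ((1 / 24 : ℚ) *
        (((n : ℚ) + 2) * (Nat.gcd c (4 * n - 8) : ℚ) ^ 2 / (4 * (n : ℚ) - 8)
          + (Nat.gcd c 2 : ℚ) ^ 2
          - (Nat.gcd c 4 : ℚ) ^ 2 / 4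
          - 2 * (Nat.gcd c (2 * n - 4) : ℚ) ^ 2 / (2 * (n : ℚ) - 4)
          - 1) = 0 ↔ c = 1) := by
  have h1 : Nat.gcd c (4 * n - 8) = c := Nat.gcd_eq_left hdvd
  have hq : (4:ℚ) ≤ (n:ℚ) := by exact_mod_cast hn
  have hA : (4*(n:ℚ)-8) ≠ 0 := by intro h; linarith
  have hB : (2*(n:ℚ)-4) ≠ 0 := by intro h; linarith
  set d := Nat.gcd c (2*n-4) with hd
  have hddvdc : d ∣ c := Nat.gcd_dvd_left _ _
  have hdm : d ∣ 2*n-4 := Nat.gcd_dvd_right _ _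
  have hdpos : 0 < d := Nat.gcd_pos_of_pos_left _ hc
  have ha1 : (1:ℚ) ≤ (Nat.gcd c 2 : ℚ) := by
    exact_mod_cast Nat.gcd_pos_of_pos_left 2 hc
  have hbc : (Nat.gcd c 4 : ℚ) ≤ (c:ℚ) := by
    exact_mod_cast Nat.le_of_dvd hc (Nat.gcd_dvd_left c 4)
  have hb4 : (Nat.gcd c 4 : ℚ) ≤ 4 := by
    exact_mod_cast Nat.le_of_dvd (by norm_num) (Nat.gcd_dvd_right c 4)
  have hb0 : (0:ℚ) ≤ (Nat.gcd c 4 : ℚ) := by positivity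
  have hcd : c = d ∨ c = 2*d := by
    obtain ⟨e, he⟩ := hddvdc
    obtain ⟨f, hf⟩ := hdm
    have hco : Nat.Coprime (c/d) ((2*n-4)/d) := Nat.coprime_div_gcd_div_gcd hdpos
    rw [he, hf, Nat.mul_div_cancel_left _ hdpos, Nat.mul_div_cancel_left _ hdpos] at hco
    have h2 : c ∣ 2*(2*n-4) := by
      have h48 : 4*n-8 = 2*(2*n-4) := by omega
      rwa [h48] at hdvd
    have he2 : e ∣ 2*f := by
      rw [he, hf] at h2
      have h2' : d*e ∣ d*(2*f) := by
        have hr : 2*(d*f) = d*(2*f) := by ring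
        rwa [hr] at h2
      exact (Nat.mul_dvd_mul_iff_left hdpos).mp h2'
    have hed : e ∣ 2 := (Nat.Coprime.dvd_of_dvd_mul_right hco) he2
    have he2' : e ≤ 2 := Nat.le_of_dvd (by norm_num) hed
    have he1 : 1 ≤ e := by
      rcases Nat.eq_zero_or_pos e with h | h
      · subst h; simp at he; omega
      · exact h
    have : e = 1 ∨ e = 2 := by omega
    rcases this with rfl | rfl
    · left; omega
    · right; omega
  rcases hcd with hcase | hcase
  · -- c divides 2n-4, so gcd c (2n-4) = c
    have hgm : Nat.gcd c (2*n-4) = c := by rw [← hd, ← hcase]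
    have key : (1 / 24 : ℚ) *
        (((n : ℚ) + 2) * (Nat.gcd c (4 * n - 8) : ℚ) ^ 2 / (4 * (n : ℚ) - 8)
          + (Nat.gcd c 2 : ℚ) ^ 2
          - (Nat.gcd c 4 : ℚ) ^ 2 / 4
          - 2 * (Nat.gcd c (2 * n - 4) : ℚ) ^ 2 / (2 * (n : ℚ) - 4)
          - 1)
        = ((c:ℚ)^2 - (Nat.gcd c 4 : ℚ)^2 + 4*(Nat.gcd c 2 : ℚ)^2 - 4)/96 := by
      rw [h1, hgm]
      have hn2 : (n:ℚ) - 2 ≠ 0 := by intro h; linarith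
      rw [show (4*(n:ℚ)-8) = 4*((n:ℚ)-2) by ring, show (2*(n:ℚ)-4) = 2*((n:ℚ)-2) by ring]
      field_simp
      ring
    rw [key]
    constructor
    · nlinarith [sq_nonneg ((c:ℚ) - (Nat.gcd c 4 : ℚ))]
    · constructor
      · intro h0
        have hz : (c:ℚ)^2 - (Nat.gcd c 4 : ℚ)^2 + 4*(Nat.gcd c 2 : ℚ)^2 - 4 = 0 := by
          field_simp at h0; linarith
        have hcb2 : (c:ℚ)^2 - (Nat.gcd c 4 : ℚ)^2 ≥ 0 := by nlinarith
        have haa : 4*(Nat.gcd c 2 : ℚ)^2 - 4 ≥ 0 := by nlinarith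
        have heq1 : (Nat.gcd c 2 : ℚ)^2 = 1 := by linarith
        have heq2 : (c:ℚ)^2 = (Nat.gcd c 4 : ℚ)^2 := by linarith
        have ha : Nat.gcd c 2 = 1 := by
          have h' : (Nat.gcd c 2)^2 = 1^2 := by
            have : (Nat.gcd c 2)^2 = 1 := by exact_mod_cast heq1
            simpa using this
          exact Nat.pow_left_injective (by norm_num) h'
        have hcb : c = Nat.gcd c 4 := by
          have h' : c^2 = (Nat.gcd c 4)^2 := by exact_mod_cast heq2
          exact Nat.pow_left_injective (by norm_num) h'
        have hc4 : c ∣ 4 := hcb ▸ Nat.gcd_dvd_right c 4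
        have hodd : ¬ (2 ∣ c) := by
          intro h2c
          have : 2 ∣ Nat.gcd c 2 := Nat.dvd_gcd h2c dvd_rfl
          omega
        have hle : c ≤ 4 := Nat.le_of_dvd (by norm_num) hc4
        have hcases : c = 1 ∨ c = 2 ∨ c = 3 ∨ c = 4 := by omega
        rcases hcases with rfl | rfl | rfl | rfl
        · rfl
        · omega
        · exfalso; revert hc4; decide
        · omega
      · intro h
        subst h
        norm_num
  · -- c = 2d, even case
    have hgm : Nat.gcd c (2*n-4) = d := hd.symm
    have ha2 : Nat.gcd c 2 = 2 := by
      have h2c : (2:ℕ) ∣ c := ⟨d, hcase⟩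
      rw [Nat.gcd_comm]
      exact Nat.gcd_eq_left h2c
    have hcq : (c:ℚ) = 2*(d:ℚ) := by exact_mod_cast congrArg (fun x : ℕ => (x:ℚ)) hcase
    have hd1 : (1:ℚ) ≤ (d:ℚ) := by exact_mod_cast hdpos
    have key : (1 / 24 : ℚ) *
        (((n : ℚ) + 2) * (Nat.gcd c (4 * n - 8) : ℚ) ^ 2 / (4 * (n : ℚ) - 8)
          + (Nat.gcd c 2 : ℚ) ^ 2
          - (Nat.gcd c 4 : ℚ) ^ 2 / 4
          - 2 * (Nat.gcd c (2 * n - 4) : ℚ) ^ 2 / (2 * (n : ℚ) - 4)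
          - 1)
        = (4*((n:ℚ)+1)*(d:ℚ)^2 + (12 - (Nat.gcd c 4 : ℚ)^2)*((n:ℚ)-2))
            /(96*((n:ℚ)-2)) := by
      rw [h1, hgm, ha2, hcq]
      push_cast
      have hn2 : (n:ℚ) - 2 ≠ 0 := by intro h; linarith
      rw [show (4*(n:ℚ)-8) = 4*((n:ℚ)-2) by ring, show (2*(n:ℚ)-4) = 2*((n:ℚ)-2) by ring]
      field_simp
      ring
    have hnum : 0 < 4*((n:ℚ)+1)*(d:ℚ)^2 + (12 - (Nat.gcd c 4 : ℚ)^2)*((n:ℚ)-2) := by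
      nlinarith [mul_nonneg (by nlinarith : (0:ℚ) ≤ (d:ℚ)^2 - 1) (by linarith : (0:ℚ) ≤ (n:ℚ)+1),
        mul_nonneg (by nlinarith : (0:ℚ) ≤ 16 - (Nat.gcd c 4 : ℚ)^2) (by linarith : (0:ℚ) ≤ (n:ℚ)-2)]
    have hden : 0 < 96*((n:ℚ)-2) := by linarith
    have hpos : 0 < (1 / 24 : ℚ) *
        (((n : ℚ) + 2) * (Nat.gcd c (4 * n - 8) : ℚ) ^ 2 / (4 * (n : ℚ) - 8)
          + (Nat.gcd c 2 : ℚ) ^ 2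
          - (Nat.gcd c 4 : ℚ) ^ 2 / 4
          - 2 * (Nat.gcd c (2 * n - 4) : ℚ) ^ 2 / (2 * (n : ℚ) - 4)
          - 1) := by
      rw [key]; exact div_pos hnum hden
    refine ⟨le_of_lt hpos, ?_, ?_⟩
    · intro h0; exact absurd h0 (ne_of_gt hpos)
    · intro h; omega
end

section
/- For every positive divisor c of 48, the rational number (1/24)·( 9·gcd(c,48)²/48 + gcd(c,2)² − gcd(c,12)²/12 − gcd(c,16)²/16 − gcd(c,24)²/24 − 1 ) is nonnegative, and it equals 0 if and only if c = 1. -/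
theorem eta_product_E7_order_nonneg (c : ℕ) (hc : 0 < c) (hdvd : c ∣ 48) :
    0 ≤ (1 / 24 : ℚ) *
        (9 * (Nat.gcd c 48 : ℚ) ^ 2 / 48
          + (Nat.gcd c 2 : ℚ) ^ 2
          - (Nat.gcd c 12 : ℚ) ^ 2 / 12
          - (Nat.gcd c 16 : ℚ) ^ 2 / 16
          - (Nat.gcd c 24 : ℚ) ^ 2 / 24
          - 1) ∧
      ((1 / 24 : ℚ) *
        (9 * (Nat.gcd c 48 : ℚ) ^ 2 / 48
          + (Nat.gcd c 2 : ℚ) ^ 2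
          - (Nat.gcd c 12 : ℚ) ^ 2 / 12
          - (Nat.gcd c 16 : ℚ) ^ 2 / 16
          - (Nat.gcd c 24 : ℚ) ^ 2 / 24
          - 1) = 0 ↔ c = 1) := by
  have hle : c ≤ 48 := Nat.le_of_dvd (by norm_num) hdvd
  interval_cases c <;> first | (exfalso; revert hdvd; decide) | (norm_num [Nat.gcd])
end

section
/- Let S be a finite set of positive integers, let a : S → ℤ, let N be a positive integer divisible by every element of S, and let L be a positive integer. If for every positive divisor c of N one has ∑_{m ∈ S} gcd(c,m)²·a(m)/m ≥ 0 (in ℚ), then for every positive divisor c of N·L one has ∑_{m ∈ S} gcd(c, L·m)²·a(m)/(L·m) ≥ 0. Moreover, if all the sums in the hypothesis are strictly positive, then all the sums in the conclusion are strictly positive. -/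
open scoped BigOperators

lemma eta_gcd_split (c L m : ℕ) (hc : 0 < c) (hL : 0 < L) :
    Nat.gcd c (L * m) = Nat.gcd c L * Nat.gcd (c / Nat.gcd c L) m := by
  set g := Nat.gcd c L with hg
  have hgpos : 0 < g := Nat.gcd_pos_of_pos_left L hc
  have hcg : g * (c / g) = c := Nat.mul_div_cancel' (Nat.gcd_dvd_left c L)
  have hLg : g * (L / g) = L := Nat.mul_div_cancel' (Nat.gcd_dvd_right c L)
  have hco : (c / g).Coprime (L / g) := Nat.coprime_div_gcd_div_gcd hgpos
  calc Nat.gcd c (L * m) = Nat.gcd (g * (c / g)) (g * ((L / g) * m)) := by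
        rw [hcg, ← mul_assoc, hLg]
    _ = g * Nat.gcd (c / g) ((L / g) * m) := Nat.gcd_mul_left g _ _
    _ = g * Nat.gcd (c / g) m := by
        rw [Nat.Coprime.gcd_mul_left_cancel_right m hco.symm]

lemma eta_sum_split (S : Finset ℕ) (hS : ∀ m ∈ S, 0 < m) (a : ℕ → ℤ)
    (L : ℕ) (hL : 0 < L) (c : ℕ) (hc : 0 < c) :
    ∑ m ∈ S, (Nat.gcd c (L * m) : ℚ) ^ 2 * (a m : ℚ) / ((L : ℚ) * (m : ℚ))
      = ((Nat.gcd c L : ℚ) ^ 2 / (L : ℚ)) *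
        ∑ m ∈ S, (Nat.gcd (c / Nat.gcd c L) m : ℚ) ^ 2 * (a m : ℚ) / (m : ℚ) := by
  rw [Finset.mul_sum]
  refine Finset.sum_congr rfl fun m hm => ?_
  rw [eta_gcd_split c L m hc hL]
  have hm0 : (m : ℚ) ≠ 0 := Nat.cast_ne_zero.mpr (hS m hm).ne'
  have hL0 : (L : ℚ) ≠ 0 := Nat.cast_ne_zero.mpr hL.ne'
  push_cast
  field_simp

theorem eta_product_rescaled_level (S : Finset ℕ) (hS : ∀ m ∈ S, 0 < m) (a : ℕ → ℤ)
    (N : ℕ) (hN : 0 < N) (hdvd : ∀ m ∈ S, m ∣ N) (L : ℕ) (hL : 0 < L) :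
    ((∀ c : ℕ, 0 < c → c ∣ N →
        0 ≤ ∑ m ∈ S, (Nat.gcd c m : ℚ) ^ 2 * (a m : ℚ) / (m : ℚ)) →
      ∀ c : ℕ, 0 < c → c ∣ N * L →
        0 ≤ ∑ m ∈ S, (Nat.gcd c (L * m) : ℚ) ^ 2 * (a m : ℚ) / ((L : ℚ) * (m : ℚ))) ∧
    ((∀ c : ℕ, 0 < c → c ∣ N →
        0 < ∑ m ∈ S, (Nat.gcd c m : ℚ) ^ 2 * (a m : ℚ) / (m : ℚ)) →
      ∀ c : ℕ, 0 < c → c ∣ N * L →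
        0 < ∑ m ∈ S, (Nat.gcd c (L * m) : ℚ) ^ 2 * (a m : ℚ) / ((L : ℚ) * (m : ℚ))) := by
  have key : ∀ c : ℕ, 0 < c → c ∣ N * L →
      0 < c / Nat.gcd c L ∧ (c / Nat.gcd c L) ∣ N := by
    intro c hc hcd
    set g := Nat.gcd c L with hg
    have hgpos : 0 < g := Nat.gcd_pos_of_pos_left L hc
    have hcg : g * (c / g) = c := Nat.mul_div_cancel' (Nat.gcd_dvd_left c L)
    have hLg : g * (L / g) = L := Nat.mul_div_cancel' (Nat.gcd_dvd_right c L)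
    have hco : (c / g).Coprime (L / g) := Nat.coprime_div_gcd_div_gcd hgpos
    constructor
    · exact Nat.div_pos (Nat.le_of_dvd hc (Nat.gcd_dvd_left c L)) hgpos
    · have h1 : g * (c / g) ∣ g * (N * (L / g)) := by
        rw [hcg]
        calc c ∣ N * L := hcd
          _ = N * (g * (L / g)) := by rw [hLg]
          _ = g * (N * (L / g)) := by ring
      have h2 : c / g ∣ N * (L / g) := (mul_dvd_mul_iff_left hgpos.ne').mp h1
      exact hco.dvd_of_dvd_mul_right h2
  have pos_factor : ∀ c : ℕ, 0 < c →
      0 < ((Nat.gcd c L : ℚ) ^ 2 / (L : ℚ)) := by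
    intro c hc
    have hgpos : 0 < Nat.gcd c L := Nat.gcd_pos_of_pos_left L hc
    positivity
  constructor
  · intro h c hc hcd
    rw [eta_sum_split S hS a L hL c hc]
    obtain ⟨h1, h2⟩ := key c hc hcd
    exact mul_nonneg (pos_factor c hc).le (h _ h1 h2)
  · intro h c hc hcd
    rw [eta_sum_split S hS a L hL c hc]
    obtain ⟨h1, h2⟩ := key c hc hcd
    exact mul_pos (pos_factor c hc) (h _ h1 h2)
end
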